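/- For every integer k ≥ 1, let D_k be the ℂ-linear endomorphism of ℂ[X] defined by D_k(f) = f' + k·X^{k−1}·f. Then the range of D_k and the ℂ-linear span of the monomials {X^a : 0 ≤ a ≤ k−2} are complementary subspaces of ℂ[X]: their intersection is {0} and their sum is all of ℂ[X]. Consequently, the quotient vector space ℂ[X] / range(D_k) has dimension k − 1, with the images of 1, X, …, X^{k−2} forming a basis. -/

import Mathlib

open Polynomial

/-- The twisted de Rham differential `D_k : f ↦ f' + k·X^{k−1}·f` on `ℂ[X]`. -/
noncomputable def Dk (k : ℕ) : Polynomial ℂ →ₗ[ℂ] Polynomial ℂ :=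
  Polynomial.derivative + (k : ℂ) • LinearMap.mulLeft ℂ (Polynomial.X ^ (k - 1))

lemma Dk_apply (k : ℕ) (f : ℂ[X]) :
    Dk k f = derivative f + C (k : ℂ) * (X ^ (k - 1) * f) := by
  simp [Dk, LinearMap.mulLeft_apply, smul_eq_C_mul]

lemma Dk_degree {k : ℕ} (hk : 1 ≤ k) {f : ℂ[X]} (hf : f ≠ 0) :
    (Dk k f).degree = (X ^ (k - 1) * f : ℂ[X]).degree := by
  have hkC : (k : ℂ) ≠ 0 := Nat.cast_ne_zero.2 (by omega)
  have h1 : (derivative f).degree < (C (k : ℂ) * (X ^ (k - 1) * f)).degree := by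
    rw [degree_C_mul hkC]
    calc (derivative f).degree < f.degree := degree_derivative_lt hf
      _ ≤ (f * X ^ (k - 1)).degree := degree_le_mul_left f (pow_ne_zero _ X_ne_zero)
      _ = _ := by rw [mul_comm]
  rw [Dk_apply, degree_add_eq_right_of_degree_lt h1, degree_C_mul hkC]

lemma Dk_degree_ge {k : ℕ} (hk : 1 ≤ k) {f : ℂ[X]} (hf : f ≠ 0) :
    ((k : ℕ) - 1 : ℕ) ≤ (Dk k f).degree := by
  rw [Dk_degree hk hf]
  calc ((k - 1 : ℕ) : WithBot ℕ) = (X ^ (k - 1) : ℂ[X]).degree := (degree_X_pow _).symm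
    _ ≤ _ := degree_le_mul_left _ hf

theorem stmt_7 (k : ℕ) (hk : 1 ≤ k) :
    (LinearMap.range (Dk k) ⊓
        Submodule.span ℂ {f : Polynomial ℂ | ∃ a : ℕ, a + 2 ≤ k ∧ f = Polynomial.X ^ a} = ⊥) ∧
    (LinearMap.range (Dk k) ⊔
        Submodule.span ℂ {f : Polynomial ℂ | ∃ a : ℕ, a + 2 ≤ k ∧ f = Polynomial.X ^ a} = ⊤) ∧
    Module.finrank ℂ (Polynomial ℂ ⧸ LinearMap.range (Dk k)) = k - 1 ∧
    ∃ b : Module.Basis (Fin (k - 1)) ℂ (Polynomial ℂ ⧸ LinearMap.range (Dk k)),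
      ∀ i : Fin (k - 1), b i = Submodule.Quotient.mk (Polynomial.X ^ (i : ℕ)) := by
  classical
  set S : Set ℂ[X] := {f : ℂ[X] | ∃ a : ℕ, a + 2 ≤ k ∧ f = X ^ a} with hS
  -- the span is degreeLT (k-1)
  have hspan : Submodule.span ℂ S = degreeLT ℂ (k - 1) := by
    rw [degreeLT_eq_span_X_pow]
    congr 1
    ext f
    simp only [hS, Set.mem_setOf_eq, Finset.coe_image, Finset.coe_range, Set.mem_image,
      Set.mem_Iio]
    constructor
    · rintro ⟨a, ha, rfl⟩; exact ⟨a, by omega, rfl⟩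
    · rintro ⟨a, ha, rfl⟩; exact ⟨a, by omega, rfl⟩
  -- intersection is trivial
  have hinf : LinearMap.range (Dk k) ⊓ Submodule.span ℂ S = ⊥ := by
    rw [hspan, eq_bot_iff]
    intro g hg
    obtain ⟨⟨f, rfl⟩, hg2⟩ := Submodule.mem_inf.1 hg
    have hg2' : (Dk k f).degree < ((k - 1 : ℕ) : WithBot ℕ) := Polynomial.mem_degreeLT.1 hg2
    by_cases hf : f = 0
    · simp [hf]
    · exact absurd (lt_of_le_of_lt (Dk_degree_ge hk hf) hg2') (lt_irrefl _)
  -- sum is everything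
  have hsup : LinearMap.range (Dk k) ⊔ Submodule.span ℂ S = ⊤ := by
    rw [eq_top_iff]
    have key : ∀ n : ℕ, ∀ f : ℂ[X], f.natDegree < n →
        f ∈ LinearMap.range (Dk k) ⊔ Submodule.span ℂ S := by
      intro n
      induction n with
      | zero => omega
      | succ n ih =>
        intro f hfn
        by_cases hf0 : f = 0
        · simp [hf0]
        by_cases hdeg : f.natDegree < k - 1
        · apply Submodule.mem_sup_right
          rw [hspan, Polynomial.mem_degreeLT]
          exact (natDegree_lt_iff_degree_lt hf0).1 hdeg
        · set d := f.natDegree with hd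
          set m := d - (k - 1) with hm
          have hmle : m ≤ d := by omega
          have hmd : m + (k - 1) = d := by omega
          have hDX : (Dk k (X ^ m)).coeff d = (k : ℂ) := by
            rw [Dk_apply, derivative_X_pow, ← pow_add, Nat.add_comm (k-1) m, hmd]
            rw [coeff_add, coeff_C_mul, coeff_C_mul, coeff_X_pow, coeff_X_pow, if_pos rfl,
              mul_one]
            have h2 : (↑m * if d = m - 1 then (1:ℂ) else 0) = 0 := by
              split_ifs with h
              · have hm0 : m = 0 := by omega
                simp [hm0]
              · ring
            rw [h2, zero_add]
          have hkC : (k : ℂ) ≠ 0 := Nat.cast_ne_zero.2 (by omega)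
          set c := f.leadingCoeff / (k : ℂ) with hc
          set g := f - c • Dk k (X ^ m) with hg
          have hgd : g.coeff d = 0 := by
            rw [hg, coeff_sub, coeff_smul, hDX, smul_eq_mul, hc, div_mul_cancel₀ _ hkC,
              Polynomial.leadingCoeff, ← hd, sub_self]
          have hgle : g.natDegree ≤ d := by
            apply Polynomial.natDegree_sub_le_iff_left ?_ |>.2 le_rfl
            calc (c • Dk k (X ^ m)).natDegree ≤ (Dk k (X ^ m)).natDegree :=
                natDegree_smul_le _ _
              _ ≤ d := by
                have := Dk_degree hk (f := X ^ m) (pow_ne_zero _ X_ne_zero)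
                rw [← pow_add, Nat.add_comm (k-1) m, hmd, degree_X_pow] at this
                exact natDegree_le_iff_degree_le.2 (le_of_eq this)
          have hgW : g ∈ LinearMap.range (Dk k) ⊔ Submodule.span ℂ S := by
            by_cases hg0 : g = 0
            · simp [hg0]
            · apply ih g
              have hglt : g.natDegree < d := by
                rcases lt_or_eq_of_le hgle with h | h
                · exact h
                · exfalso
                  have hlc := Polynomial.leadingCoeff_ne_zero.2 hg0
                  rw [Polynomial.leadingCoeff, h, hgd] at hlc
                  exact hlc rfl
              omega
          have hDW : Dk k (X ^ m) ∈ LinearMap.range (Dk k) ⊔ Submodule.span ℂ S :=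
            Submodule.mem_sup_left ⟨X ^ m, rfl⟩
          have hfeq : f = g + c • Dk k (X ^ m) := by rw [hg]; ring
          rw [hfeq]
          exact Submodule.add_mem _ hgW (Submodule.smul_mem _ _ hDW)
    intro f _
    exact key (f.natDegree + 1) f (Nat.lt_succ_self _)
  refine ⟨hinf, hsup, ?_⟩
  -- basis of the quotient
  set R := LinearMap.range (Dk k) with hR
  set v : Fin (k - 1) → (ℂ[X] ⧸ R) := fun i => Submodule.Quotient.mk (X ^ (i : ℕ)) with hv
  have hli : LinearIndependent ℂ v := by
    rw [Fintype.linearIndependent_iff]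
    intro c hc
    have hmk : (Submodule.Quotient.mk (∑ i : Fin (k - 1), c i • (X ^ (i : ℕ) : ℂ[X])) :
        ℂ[X] ⧸ R) = 0 := by
      rw [← hc]
      simp only [← Submodule.mkQ_apply, map_sum, map_smul]
      rfl
    have hmem : (∑ i : Fin (k - 1), c i • (X ^ (i : ℕ) : ℂ[X])) ∈ R :=
      (Submodule.Quotient.mk_eq_zero _).1 hmk
    have hmem2 : (∑ i : Fin (k - 1), c i • (X ^ (i : ℕ) : ℂ[X])) ∈ Submodule.span ℂ S := by
      apply Submodule.sum_mem
      intro i _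
      exact Submodule.smul_mem _ _ (Submodule.subset_span ⟨i, by omega, rfl⟩)
    have h0 : (∑ i : Fin (k - 1), c i • (X ^ (i : ℕ) : ℂ[X])) = 0 := by
      have h := hinf ▸ Submodule.mem_inf.2 ⟨hmem, hmem2⟩
      simpa using h
    intro i
    have hcoeff := congrArg (fun p => Polynomial.coeff p (i : ℕ)) h0
    simp only [Polynomial.finset_sum_coeff, Polynomial.coeff_smul, Polynomial.coeff_X_pow,
      Polynomial.coeff_zero, smul_eq_mul] at hcoeff
    rw [Finset.sum_eq_single i] at hcoeff
    · simpa using hcoeff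
    · intro j _ hj
      have hne : (j : ℕ) ≠ (i : ℕ) := fun h => hj (Fin.ext h)
      simp [Ne.symm hne]
    · simp
  have hsp : ⊤ ≤ Submodule.span ℂ (Set.range v) := by
    rintro q -
    obtain ⟨f, rfl⟩ := Submodule.Quotient.mk_surjective _ q
    have hf : f ∈ LinearMap.range (Dk k) ⊔ Submodule.span ℂ S := hsup ▸ Submodule.mem_top
    obtain ⟨g, hg, p, hp, rfl⟩ := Submodule.mem_sup.1 hf
    rw [Submodule.Quotient.mk_add, (Submodule.Quotient.mk_eq_zero _).2 hg, zero_add]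
    have hle : Submodule.span ℂ S ≤
        Submodule.comap R.mkQ (Submodule.span ℂ (Set.range v)) := by
      rw [Submodule.span_le]
      rintro x ⟨a, ha, rfl⟩
      exact Submodule.subset_span ⟨⟨a, by omega⟩, by simp [hv, Submodule.mkQ_apply]⟩
    simpa [Submodule.mkQ_apply] using hle hp
  refine ⟨?_, ⟨Module.Basis.mk hli hsp, fun i => Module.Basis.mk_apply hli hsp i⟩⟩
  rw [Module.finrank_eq_card_basis (Module.Basis.mk hli hsp), Fintype.card_fin]
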